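/- Let A ∈ ℝ^{n×n}, B ∈ ℝ^{n×m}, C ∈ ℝ^{p×n}, and K_P ∈ ℝ^{m×p}, and suppose that A_K := A − B K_P C is invertible. Then the block matrix [[A, B], [C, 0]] ∈ ℝ^{(n+p)×(n+m)} has rank n + p if and only if the matrix C A_K^{-1} B ∈ ℝ^{p×m} has rank p (full row rank). -/

import Mathlib

open Matrix

/-- A matrix has full row rank iff its `mulVecLin` is surjective. -/
lemma rank_eq_card_iff_surjective {k l : Type*} [Fintype k] [Fintype l]
    (M : Matrix k l ℝ) :
    M.rank = Fintype.card k ↔ Function.Surjective M.mulVecLin := by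
  constructor
  · intro h
    rw [← LinearMap.range_eq_top]
    apply Submodule.eq_top_of_finrank_eq
    rw [← Matrix.rank, h, Module.finrank_pi]
  · intro h
    rw [Matrix.rank, LinearMap.range_eq_top.mpr h, finrank_top, Module.finrank_pi]

/-- Surjectivity of a block diagonal matrix splits. -/
lemma surjective_fromBlocks_diag_iff {n' m' p' q' : Type*}
    [Fintype n'] [Fintype m'] [Fintype p'] [Fintype q']
    (X : Matrix n' m' ℝ) (D : Matrix p' q' ℝ) :
    Function.Surjective (Matrix.fromBlocks X 0 0 D).mulVecLin ↔
      Function.Surjective X.mulVecLin ∧ Function.Surjective D.mulVecLin := by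
  constructor
  · intro h
    constructor
    · intro u
      obtain ⟨v, hv⟩ := h (Sum.elim u 0)
      rw [← Sum.elim_comp_inl_inr v, Matrix.mulVecLin_apply, Matrix.fromBlocks_mulVec] at hv
      refine ⟨v ∘ Sum.inl, funext fun i => ?_⟩
      have := congrFun hv (Sum.inl i)
      simpa using this
    · intro w
      obtain ⟨v, hv⟩ := h (Sum.elim 0 w)
      rw [← Sum.elim_comp_inl_inr v, Matrix.mulVecLin_apply, Matrix.fromBlocks_mulVec] at hv
      refine ⟨v ∘ Sum.inr, funext fun j => ?_⟩
      have := congrFun hv (Sum.inr j)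
      simpa using this
  · rintro ⟨h₁, h₂⟩ t
    obtain ⟨x, hx⟩ := h₁ (t ∘ Sum.inl)
    obtain ⟨y, hy⟩ := h₂ (t ∘ Sum.inr)
    refine ⟨Sum.elim x y, funext fun i => ?_⟩
    cases i with
    | inl i =>
      have := congrFun hx i
      simp only [Matrix.mulVecLin_apply, Matrix.fromBlocks_mulVec]
      simpa using this
    | inr j =>
      have := congrFun hy j
      simp only [Matrix.mulVecLin_apply, Matrix.fromBlocks_mulVec]
      simpa using this

/-- With `A_K := A − B K_P C` invertible, the block matrix
`[[A, B], [C, 0]]` has full row rank `n + p` if and only if the steady-state gain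
matrix `C A_K⁻¹ B` has full row rank `p`. -/
theorem fullRowRank_blocks_iff_steadyStateGain (n m p : ℕ)
    (A : Matrix (Fin n) (Fin n) ℝ) (B : Matrix (Fin n) (Fin m) ℝ)
    (C : Matrix (Fin p) (Fin n) ℝ) (KP : Matrix (Fin m) (Fin p) ℝ)
    (hAK : IsUnit (A - B * KP * C)) :
    (Matrix.fromBlocks A B C 0).rank = n + p ↔
      (C * (A - B * KP * C)⁻¹ * B).rank = p := by
  set AK := A - B * KP * C with hAKdef
  set E := C * AK⁻¹ * B with hEdef
  have hdet : IsUnit AK.det := (Matrix.isUnit_iff_isUnit_det AK).mp hAK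
  -- Step 1: column operations: (fromBlocks A B C 0) * U = fromBlocks AK B C 0
  have step1 : (Matrix.fromBlocks AK B C 0).rank = (Matrix.fromBlocks A B C 0).rank := by
    have hU : (Matrix.fromBlocks A B C 0) *
        (Matrix.fromBlocks 1 0 (-(KP * C)) 1 : Matrix (Fin n ⊕ Fin m) (Fin n ⊕ Fin m) ℝ) = Matrix.fromBlocks AK B C 0 := by
      rw [Matrix.fromBlocks_multiply]
      simp [hAKdef, Matrix.mul_neg, Matrix.mul_assoc, sub_eq_add_neg]
    have hdetU : IsUnit (Matrix.fromBlocks (1 : Matrix (Fin n) (Fin n) ℝ) 0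
        (-(KP * C)) (1 : Matrix (Fin m) (Fin m) ℝ)).det := by
      rw [Matrix.det_fromBlocks_zero₁₂]; simp
    rw [← hU]
    exact Matrix.rank_mul_eq_left_of_isUnit_det _ _ hdetU
  -- Step 2: row operations: L * (fromBlocks AK B C 0) = fromBlocks AK B 0 (-E)
  have step2 : (Matrix.fromBlocks AK B 0 (-E)).rank = (Matrix.fromBlocks AK B C 0).rank := by
    have hL : (Matrix.fromBlocks 1 0 (-(C * AK⁻¹)) 1 : Matrix (Fin n ⊕ Fin p) (Fin n ⊕ Fin p) ℝ) *
        (Matrix.fromBlocks AK B C 0) = Matrix.fromBlocks AK B 0 (-E) := by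
      rw [Matrix.fromBlocks_multiply]
      have h1 : C * AK⁻¹ * AK = C := by
        rw [Matrix.mul_assoc, Matrix.nonsing_inv_mul AK hdet, Matrix.mul_one]
      simp [Matrix.neg_mul, ← Matrix.mul_assoc, h1, hEdef]
    have hdetL : IsUnit (Matrix.fromBlocks (1 : Matrix (Fin n) (Fin n) ℝ) 0
        (-(C * AK⁻¹)) (1 : Matrix (Fin p) (Fin p) ℝ)).det := by
      rw [Matrix.det_fromBlocks_zero₁₂]; simp
    rw [← hL]
    exact Matrix.rank_mul_eq_right_of_isUnit_det _ _ hdetL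
  -- Step 3: column operations: (fromBlocks AK B 0 (-E)) * R = fromBlocks AK 0 0 (-E)
  have step3 : (Matrix.fromBlocks AK 0 0 (-E)).rank = (Matrix.fromBlocks AK B 0 (-E)).rank := by
    have hR : (Matrix.fromBlocks AK B 0 (-E)) *
        (Matrix.fromBlocks 1 (-(AK⁻¹ * B)) 0 1 : Matrix (Fin n ⊕ Fin m) (Fin n ⊕ Fin m) ℝ) = Matrix.fromBlocks AK 0 0 (-E) := by
      rw [Matrix.fromBlocks_multiply]
      have h1 : AK * (AK⁻¹ * B) = B := by
        rw [← Matrix.mul_assoc, Matrix.mul_nonsing_inv AK hdet, Matrix.one_mul]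
      simp [Matrix.mul_neg, h1]
    have hdetR : IsUnit (Matrix.fromBlocks (1 : Matrix (Fin n) (Fin n) ℝ)
        (-(AK⁻¹ * B)) 0 (1 : Matrix (Fin m) (Fin m) ℝ)).det := by
      rw [Matrix.det_fromBlocks_zero₂₁]; simp
    rw [← hR]
    exact Matrix.rank_mul_eq_left_of_isUnit_det _ _ hdetR
  -- rank(-E) = rank E
  have hnegE : (-E).rank = E.rank := by
    have : E * (-1 : Matrix (Fin m) (Fin m) ℝ) = -E := by simp
    rw [← this]
    apply Matrix.rank_mul_eq_left_of_isUnit_det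
    simp [Matrix.det_neg]
  -- AK is surjective
  have hAKsurj : Function.Surjective AK.mulVecLin := by
    intro u
    refine ⟨AK⁻¹ *ᵥ u, ?_⟩
    rw [Matrix.mulVecLin_apply, Matrix.mulVec_mulVec, Matrix.mul_nonsing_inv AK hdet,
      Matrix.one_mulVec]
  calc (Matrix.fromBlocks A B C 0).rank = n + p ↔
      (Matrix.fromBlocks AK 0 0 (-E)).rank = n + p := by
        rw [← step1, ← step2, ← step3]
    _ ↔ Function.Surjective (Matrix.fromBlocks AK 0 0 (-E)).mulVecLin := by
        have := rank_eq_card_iff_surjective (Matrix.fromBlocks AK 0 0 (-E))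
        simpa using this
    _ ↔ Function.Surjective AK.mulVecLin ∧ Function.Surjective (-E).mulVecLin :=
        surjective_fromBlocks_diag_iff AK (-E)
    _ ↔ Function.Surjective (-E).mulVecLin := by
        exact and_iff_right hAKsurj
    _ ↔ (-E).rank = p := by
        have := rank_eq_card_iff_surjective (-E)
        simpa using this.symm
    _ ↔ E.rank = p := by rw [hnegE]
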